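/- Let p be an odd prime, g ≥ 1 with g ≤ (p−1)/2, and 1 ≤ i, j ≤ g. Set d' = (p−1)(2g+1)/2 − ip + j, a' = g − j + 1/2, c' = g − j + 1 (in ℚ). Then the rational number ∏_{s=0}^{N−1}(a'+s) / ∏_{s=0}^{N−1}(c'+s) with N = d' − (p−1)/2 has p-adic valuation 0; that is, (a')_N/(c')_N, where (x)_N = x(x+1)⋯(x+N−1) is the Pochhammer symbol, is a p-adic unit. -/

import Mathlib

private lemma padicValNat_finset_prod (p : ℕ) [Fact p.Prime] (S : Finset ℕ) (f : ℕ → ℕ)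
    (h : ∀ s ∈ S, f s ≠ 0) :
    padicValNat p (∏ s ∈ S, f s) = ∑ s ∈ S, padicValNat p (f s) := by
  classical
  induction S using Finset.induction with
  | empty => simp
  | @insert a s hx ih =>
    rw [Finset.prod_insert hx, Finset.sum_insert hx,
      padicValNat.mul (h a (Finset.mem_insert_self a s))
        (Finset.prod_ne_zero_iff.2 fun i hi => h i (Finset.mem_insert_of_mem hi)),
      ih fun i hi => h i (Finset.mem_insert_of_mem hi)]

private lemma padicValNat_eq_ite (p : ℕ) [hp : Fact p.Prime] (n : ℕ) (hn : 0 < n)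
    (hsq : n < p ^ 2) : padicValNat p n = if p ∣ n then 1 else 0 := by
  by_cases hdvd : p ∣ n
  · simp only [hdvd, if_true]
    have h1 : 1 ≤ padicValNat p n := one_le_padicValNat_of_dvd hn.ne' hdvd
    have h2 : padicValNat p n ≤ 1 := by
      by_contra hcon
      have h2le : 2 ≤ padicValNat p n := by omega
      have : p ^ 2 ∣ n := dvd_trans (pow_dvd_pow p h2le) pow_padicValNat_dvd
      have := Nat.le_of_dvd hn this
      omega
    omega
  · simp only [hdvd, if_false]
    exact padicValNat.eq_zero_of_not_dvd hdvd

/-- With `a' = g−j+1/2`, `c' = g−j+1` in `ℚ`, `d' = (p−1)(2g+1)/2 − ip + j` and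
`N = d' − (p−1)/2`, the ratio of Pochhammer symbols `(a')_N / (c')_N` is a
`p`-adic unit, i.e. its `p`-adic valuation is `0`. -/
theorem pochhammer_ratio_padicVal_zero (p : ℕ) [hp : Fact p.Prime] (hodd : Odd p)
    (g i j : ℕ) (hg1 : 1 ≤ g) (hg : g ≤ (p - 1) / 2)
    (hi1 : 1 ≤ i) (hig : i ≤ g) (hj1 : 1 ≤ j) (hjg : j ≤ g)
    (a' c' : ℚ) (d' N : ℕ)
    (ha' : a' = (g : ℚ) - j + 1 / 2)
    (hc' : c' = (g : ℚ) - j + 1)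
    (hd' : d' = (p - 1) * (2 * g + 1) / 2 - i * p + j)
    (hN : N = d' - (p - 1) / 2) :
    padicValRat p ((∏ s ∈ Finset.range N, (a' + s)) / (∏ s ∈ Finset.range N, (c' + s))) = 0 := by
  obtain ⟨q, hq⟩ := hodd
  have hp2 : 2 ≤ p := hp.out.two_le
  have hq1 : 1 ≤ q := by omega
  have hgq : g ≤ q := by omega
  set m := g - j with hm
  set k := g - i with hk
  -- N = k * p - m
  have e1 : (p - 1) * (2 * g + 1) / 2 = 2 * (q * g) + q := by
    have h1 : p - 1 = 2 * q := by omega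
    rw [h1, show 2 * q * (2 * g + 1) = (2 * (q * g) + q) * 2 by ring]
    exact Nat.mul_div_cancel _ (by norm_num)
  have e2 : i * p = 2 * (q * i) + i := by rw [hq]; ring
  have e3 : k * p = 2 * (q * k) + k := by rw [hq]; ring
  have e4 : q * i + q * k = q * g := by
    rw [← Nat.mul_add, hk]; congr 1; omega
  have e5 : k = 0 ∨ q ≤ q * k := by
    rcases Nat.eq_zero_or_pos k with h | h
    · exact Or.inl h
    · exact Or.inr (Nat.le_mul_of_pos_right q h)
  have hNkm : N = k * p - m := by
    rw [hN, hd', e1, e2, e3]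
    have hqi : q * i ≤ q * g := Nat.mul_le_mul_left q hig
    omega
  -- case k = 0
  rcases Nat.eq_zero_or_pos k with hk0 | hkpos
  · have hN0 : N = 0 := by rw [hNkm, hk0]; simp
    simp [hN0]
  have hkq : k ≤ q - 1 := by omega
  -- rewrite the products
  have hmj : (g : ℚ) - j = (m : ℚ) := by
    rw [hm, Nat.cast_sub hjg]
  have num_eq : (∏ s ∈ Finset.range N, (a' + s)) =
      ((∏ s ∈ Finset.range N, (2 * (m + s) + 1) : ℕ) : ℚ) / 2 ^ N := by
    rw [Nat.cast_prod]
    rw [show ((2 : ℚ)) ^ N = ∏ _s ∈ Finset.range N, (2 : ℚ) by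
      rw [Finset.prod_const]; rw [Finset.card_range]]
    rw [← Finset.prod_div_distrib]
    refine Finset.prod_congr rfl fun s _ => ?_
    rw [ha', hmj]
    push_cast
    ring
  have den_eq : (∏ s ∈ Finset.range N, (c' + s)) =
      ((∏ s ∈ Finset.range N, (m + 1 + s) : ℕ) : ℚ) := by
    rw [Nat.cast_prod]
    refine Finset.prod_congr rfl fun s _ => ?_
    rw [hc', hmj]
    push_cast
    ring
  set A := ∏ s ∈ Finset.range N, (2 * (m + s) + 1) with hA
  set B := ∏ s ∈ Finset.range N, (m + 1 + s) with hB
  have hAne : A ≠ 0 := Finset.prod_ne_zero_iff.2 fun s _ => by omega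
  have hBne : B ≠ 0 := Finset.prod_ne_zero_iff.2 fun s _ => by omega
  have hAQ : (A : ℚ) ≠ 0 := Nat.cast_ne_zero.2 hAne
  have hBQ : (B : ℚ) ≠ 0 := Nat.cast_ne_zero.2 hBne
  have h2N : ((2 : ℚ)) ^ N ≠ 0 := by positivity
  have hXne : (A : ℚ) / 2 ^ N ≠ 0 := div_ne_zero hAQ h2N
  rw [num_eq, den_eq, padicValRat.div hXne hBQ, padicValRat.div hAQ h2N,
    padicValRat.pow (q := (2 : ℚ))]
  have hval2 : padicValRat p (2 : ℚ) = 0 := by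
    rw [show ((2 : ℚ)) = ((2 : ℕ) : ℚ) by norm_num, padicValRat.of_nat]
    rw [padicValNat.eq_zero_of_not_dvd]
    · simp
    · intro hdvd
      have := Nat.le_of_dvd (by norm_num) hdvd
      omega
  rw [hval2, padicValRat.of_nat, padicValRat.of_nat]
  -- main claim : padicValNat p A = padicValNat p B
  have key : padicValNat p A = padicValNat p B := by
    rw [hA, hB, padicValNat_finset_prod p _ _ (fun s _ => by omega),
      padicValNat_finset_prod p _ _ (fun s _ => by omega)]
    have hkp2 : k * p < p ^ 2 := by
      have : k * p < p * p := (Nat.mul_lt_mul_right (by omega : 0 < p)).2 (by omega)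
      rwa [sq]
    have sumA : ∀ s ∈ Finset.range N, padicValNat p (2 * (m + s) + 1) =
        if p ∣ 2 * (m + s) + 1 then 1 else 0 := by
      intro s hs
      have hsN : s < N := Finset.mem_range.1 hs
      refine padicValNat_eq_ite p _ (by omega) ?_
      have h1 : 2 * (m + s) + 1 ≤ 2 * (k * p) := by omega
      have h2 : 2 * (k * p) < p * p := by
        rw [show 2 * (k * p) = (2 * k) * p by ring]
        exact (Nat.mul_lt_mul_right (by omega : 0 < p)).2 (by omega)
      rw [sq]; omega
    have sumB : ∀ s ∈ Finset.range N, padicValNat p (m + 1 + s) =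
        if p ∣ m + 1 + s then 1 else 0 := by
      intro s hs
      have hsN : s < N := Finset.mem_range.1 hs
      refine padicValNat_eq_ite p _ (by omega) ?_
      omega
    rw [Finset.sum_congr rfl sumA, Finset.sum_congr rfl sumB,
      ← Finset.sum_filter, ← Finset.sum_filter]
    simp only [Finset.sum_const, smul_eq_mul, mul_one]
    -- both filters have cardinality k
    have cardA : ((Finset.range N).filter (fun s => p ∣ 2 * (m + s) + 1)).card = k := by
      have himg : (Finset.range N).filter (fun s => p ∣ 2 * (m + s) + 1) =
          (Finset.range k).image (fun r => p * r + (q - m)) := by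
        ext s
        simp only [Finset.mem_filter, Finset.mem_range, Finset.mem_image]
        constructor
        · rintro ⟨hsN, t, ht⟩
          have htodd : Odd t := by
            have hodd' : Odd (p * t) := ht ▸ ⟨m + s, by ring⟩
            rcases Nat.odd_mul.1 hodd' with ⟨_, h⟩
            exact h
          obtain ⟨r, hr⟩ := htodd
          refine ⟨r, ?_, ?_⟩
          · -- r < k
            by_contra hcon
            have hkr : k ≤ r := by omega
            have h1 : k * p ≤ r * p := Nat.mul_le_mul_right p hkr
            have h2 : p * t = 2 * (r * p) + p := by rw [hr, hq]; ring
            omega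
          · -- p * r + (q - m) = s
            have h2 : p * t = 2 * (p * r) + p := by rw [hr]; ring
            have h3 : p * r = r * p := Nat.mul_comm p r
            omega
        · rintro ⟨r, hrk, hrs⟩
          have h1 : (r + 1) * p ≤ k * p := Nat.mul_le_mul_right p (by omega)
          have h2 : (r + 1) * p = p * r + p := by ring
          constructor
          · omega
          · refine ⟨2 * r + 1, ?_⟩
            have h3 : p * (2 * r + 1) = 2 * (p * r) + p := by ring
            omega
      rw [himg, Finset.card_image_of_injective _ (fun a b hab => by
        have : p * a = p * b := by omega
        exact Nat.eq_of_mul_eq_mul_left (by omega) this), Finset.card_range]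
    have cardB : ((Finset.range N).filter (fun s => p ∣ m + 1 + s)).card = k := by
      have himg : (Finset.range N).filter (fun s => p ∣ m + 1 + s) =
          (Finset.range k).image (fun r => p * r + (p - m - 1)) := by
        ext s
        simp only [Finset.mem_filter, Finset.mem_range, Finset.mem_image]
        constructor
        · rintro ⟨hsN, t, ht⟩
          have ht1 : 1 ≤ t := by
            rcases Nat.eq_zero_or_pos t with h | h
            · rw [h, Nat.mul_zero] at ht; omega
            · exact h
          obtain ⟨u, rfl⟩ : ∃ u, t = u + 1 := ⟨t - 1, by omega⟩
          refine ⟨u, ?_, ?_⟩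
          · -- u < k
            by_contra hcon
            have hkt : k ≤ u := by omega
            have h1 : k * p ≤ u * p := Nat.mul_le_mul_right p hkt
            have h2 : p * (u + 1) = u * p + p := by ring
            omega
          · -- p * u + (p - m - 1) = s
            have h2 : p * (u + 1) = p * u + p := by ring
            omega
        · rintro ⟨r, hrk, hrs⟩
          have h1 : (r + 1) * p ≤ k * p := Nat.mul_le_mul_right p (by omega)
          have h2 : (r + 1) * p = p * r + p := by ring
          have h3 : p * (r + 1) = p * r + p := by ring
          constructor
          · omega
          · exact ⟨r + 1, by omega⟩
      rw [himg, Finset.card_image_of_injective _ (fun a b hab => by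
        have : p * a = p * b := by omega
        exact Nat.eq_of_mul_eq_mul_left (by omega) this), Finset.card_range]
    rw [cardA, cardB]
  rw [key]
  ring
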